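/- Let (Ω, P) be a probability space, N a natural number, and σ_0, …, σ_{N−1} : Ω → ℝ square-integrable random variables satisfying E[σ_n σ_m] = λ_n δ_{nm} for all n, m < N, where λ_n ∈ ℝ. Let d₁, d₂ be positive integers and ψ_n ∈ L²(ℝ^{d₁}, ℂ), φ_n ∈ L²(ℝ^{d₂}, ℂ) for n < N (with respect to Lebesgue measure). Define K(ω, a, b) := Σ_{n<N} σ_n(ω) ψ_n(a) φ_n(b). Then for all shifts Δa ∈ ℝ^{d₁} and Δb ∈ ℝ^{d₂}: ∬ E[ conj(K(·, a − Δa, b − Δb)) · K(·, a, b) ] da db = Σ_{n<N} λ_n · (∫ conj(ψ_n(a − Δa)) ψ_n(a) da) · (∫ conj(φ_n(b − Δb)) φ_n(b) db). -/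

import Mathlib

open MeasureTheory

open ENNReal ComplexConjugate

lemma my_memLp_conj {α : Type*} [MeasurableSpace α] {μ : Measure α} {p : ℝ≥0∞}
    {g : α → ℂ} (h : MemLp g p μ) :
    MemLp (fun x => (starRingEnd ℂ) (g x)) p μ :=
  ⟨RCLike.continuous_conj.comp_aestronglyMeasurable h.1, by
    rw [show (fun x => (starRingEnd ℂ) (g x)) = conj g from rfl, eLpNorm_conj]; exact h.2⟩

lemma my_integrable_mul {α 𝕜 : Type*} [RCLike 𝕜] [MeasurableSpace α] {μ : Measure α}
    {f g : α → 𝕜} (hf : MemLp f 2 μ) (hg : MemLp g 2 μ) :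
    Integrable (fun x => f x * g x) μ := by
  have h : MemLp (f • g) 1 μ := hg.smul hf
  rw [memLp_one_iff_integrable] at h
  exact h

lemma my_autocorr_integrable (d : ℕ) (Δ : Fin d → ℝ)
    (f : Lp ℂ 2 (volume : Measure (Fin d → ℝ))) :
    Integrable (fun a => (starRingEnd ℂ) (f (a - Δ)) * f a) volume := by
  have h1 : MemLp (fun a => (f : (Fin d → ℝ) → ℂ) (a - Δ)) 2 volume :=
    (Lp.memLp f).comp_measurePreserving (measurePreserving_sub_right volume Δ)
  exact my_integrable_mul (my_memLp_conj h1) (Lp.memLp f)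

lemma my_inner_integral {Ω : Type*} [MeasurableSpace Ω] (P : Measure Ω) [IsProbabilityMeasure P]
    (N : ℕ) (σ : Fin N → Ω → ℝ) (lam : Fin N → ℝ)
    (hL2 : ∀ n, MemLp (σ n) 2 P)
    (huncorr : ∀ n m : Fin N, ∫ ω, σ n ω * σ m ω ∂P = if n = m then lam n else 0)
    (c d : Fin N → ℂ) :
    ∫ ω, (starRingEnd ℂ) (∑ n : Fin N, (σ n ω : ℂ) * c n)
        * (∑ m : Fin N, (σ m ω : ℂ) * d m) ∂P
      = ∑ n : Fin N, (lam n : ℂ) * ((starRingEnd ℂ) (c n) * d n) := by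
  have hptwise : ∀ ω, (starRingEnd ℂ) (∑ n : Fin N, (σ n ω : ℂ) * c n)
        * (∑ m : Fin N, (σ m ω : ℂ) * d m)
      = ∑ n : Fin N, ∑ m : Fin N,
          ((σ n ω * σ m ω : ℝ) : ℂ) * ((starRingEnd ℂ) (c n) * d m) := by
    intro ω
    rw [map_sum, Finset.sum_mul_sum]
    refine Finset.sum_congr rfl fun n _ => Finset.sum_congr rfl fun m _ => ?_
    rw [map_mul, Complex.conj_ofReal]
    push_cast
    ring
  rw [integral_congr_ae (Filter.Eventually.of_forall hptwise)]
  have hint : ∀ n m : Fin N,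
      Integrable (fun ω => ((σ n ω * σ m ω : ℝ) : ℂ) * ((starRingEnd ℂ) (c n) * d m)) P :=
    fun n m => ((my_integrable_mul (hL2 n) (hL2 m)).ofReal (𝕜 := ℂ)).mul_const _
  rw [integral_finset_sum _ fun n _ => integrable_finset_sum _ fun m _ => hint n m]
  refine Finset.sum_congr rfl fun n _ => ?_
  rw [integral_finset_sum _ fun m _ => hint n m]
  have : ∀ m : Fin N, ∫ ω, ((σ n ω * σ m ω : ℝ) : ℂ) * ((starRingEnd ℂ) (c n) * d m) ∂P
      = ((if n = m then lam n else 0 : ℝ) : ℂ) * ((starRingEnd ℂ) (c n) * d m) := by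
    intro m
    simp_rw [← smul_eq_mul (b := (starRingEnd ℂ) (c n) * d m)]
    have hcast : (∫ x, ((σ n x * σ m x : ℝ) : ℂ) ∂P) = ((∫ x, σ n x * σ m x ∂P : ℝ) : ℂ) :=
      integral_ofReal
    rw [integral_smul_const, hcast, huncorr n m]
  simp only [this, apply_ite Complex.ofReal, Complex.ofReal_zero, ite_mul, zero_mul,
    Finset.sum_ite_eq, Finset.mem_univ, if_true]

/-- Channel correlation function identity (Corollary 1, CCF row): for a random
kernel `K(ω,a,b) = Σ_{n<N} σ_n(ω) ψ_n(a) φ_n(b)` with uncorrelated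
square-integrable real coefficients `E[σ_n σ_m] = λ_n δ_{nm}` and
`ψ_n ∈ L²(ℝ^{d₁})`, `φ_n ∈ L²(ℝ^{d₂})`, the shifted correlation factorizes as
`∬ E[conj(K(·, a−Δa, b−Δb)) K(·,a,b)] da db
  = Σ_n λ_n (∫ conj(ψ_n(a−Δa)) ψ_n(a) da) (∫ conj(φ_n(b−Δb)) φ_n(b) db)`. -/
theorem channel_correlation_function_identity
    {Ω : Type*} [MeasurableSpace Ω] (P : Measure Ω) [IsProbabilityMeasure P]
    (N : ℕ) (σ : Fin N → Ω → ℝ) (lam : Fin N → ℝ)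
    (hL2 : ∀ n, MemLp (σ n) 2 P)
    (huncorr : ∀ n m : Fin N, ∫ ω, σ n ω * σ m ω ∂P = if n = m then lam n else 0)
    (d₁ d₂ : ℕ) (hd₁ : 0 < d₁) (hd₂ : 0 < d₂)
    (ψ : Fin N → Lp ℂ 2 (volume : Measure (Fin d₁ → ℝ)))
    (φ : Fin N → Lp ℂ 2 (volume : Measure (Fin d₂ → ℝ))) :
    ∀ (Δa : Fin d₁ → ℝ) (Δb : Fin d₂ → ℝ),
      ∫ z : (Fin d₁ → ℝ) × (Fin d₂ → ℝ),
          (∫ ω, (starRingEnd ℂ)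
                (∑ n : Fin N, (σ n ω : ℂ) * ψ n (z.1 - Δa) * φ n (z.2 - Δb))
              * (∑ n : Fin N, (σ n ω : ℂ) * ψ n z.1 * φ n z.2) ∂P)
        = ∑ n : Fin N, (lam n : ℂ)
            * (∫ a, (starRingEnd ℂ) (ψ n (a - Δa)) * ψ n a)
            * (∫ b, (starRingEnd ℂ) (φ n (b - Δb)) * φ n b) := by
  intro Δa Δb
  -- Step 1: compute the inner integral pointwise in z
  have hinner : ∀ z : (Fin d₁ → ℝ) × (Fin d₂ → ℝ),
      (∫ ω, (starRingEnd ℂ)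
            (∑ n : Fin N, (σ n ω : ℂ) * ψ n (z.1 - Δa) * φ n (z.2 - Δb))
          * (∑ n : Fin N, (σ n ω : ℂ) * ψ n z.1 * φ n z.2) ∂P)
        = ∑ n : Fin N, (lam n : ℂ)
            * (((starRingEnd ℂ) (ψ n (z.1 - Δa)) * ψ n z.1)
              * ((starRingEnd ℂ) (φ n (z.2 - Δb)) * φ n z.2)) := by
    intro z
    have := my_inner_integral P N σ lam hL2 huncorr
      (fun n => ψ n (z.1 - Δa) * φ n (z.2 - Δb)) (fun n => ψ n z.1 * φ n z.2)
    simp_rw [← mul_assoc] at this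
    rw [this]
    refine Finset.sum_congr rfl fun n _ => ?_
    rw [map_mul]
    ring
  rw [integral_congr_ae (Filter.Eventually.of_forall hinner)]
  have hFint : ∀ n : Fin N, Integrable
      (fun a => (starRingEnd ℂ) ((ψ n : (Fin d₁ → ℝ) → ℂ) (a - Δa)) * ψ n a) volume :=
    fun n => my_autocorr_integrable d₁ Δa (ψ n)
  have hGint : ∀ n : Fin N, Integrable
      (fun b => (starRingEnd ℂ) ((φ n : (Fin d₂ → ℝ) → ℂ) (b - Δb)) * φ n b) volume :=
    fun n => my_autocorr_integrable d₂ Δb (φ n)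
  have hterm : ∀ n : Fin N, Integrable
      (fun z : (Fin d₁ → ℝ) × (Fin d₂ → ℝ) => (lam n : ℂ)
        * (((starRingEnd ℂ) (ψ n (z.1 - Δa)) * ψ n z.1)
          * ((starRingEnd ℂ) (φ n (z.2 - Δb)) * φ n z.2))) volume := by
    intro n
    rw [MeasureTheory.Measure.volume_eq_prod _ _]
    exact ((hFint n).mul_prod (hGint n)).const_mul _
  rw [integral_finset_sum _ fun n _ => hterm n]
  refine Finset.sum_congr rfl fun n _ => ?_
  rw [integral_const_mul, MeasureTheory.Measure.volume_eq_prod _ _,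
    integral_prod_mul (fun a => (starRingEnd ℂ) ((ψ n : (Fin d₁ → ℝ) → ℂ) (a - Δa)) * ψ n a)
      (fun b => (starRingEnd ℂ) ((φ n : (Fin d₂ → ℝ) → ℂ) (b - Δb)) * φ n b), mul_assoc]
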